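/- The KO-dimension of the internal spectral triple of the Standard Model is 6: the maps J_F, D_F, χ_F on H_F satisfy J_F ∘ J_F = id, D_F ∘ J_F = J_F ∘ D_F, and χ_F ∘ J_F = − J_F ∘ χ_F, for all values of the parameters Υ_ν, Υ_e, Υ_u, Υ_d, Υ_R ∈ ℂ. -/

import Mathlib

open Matrix ComplexConjugate

noncomputable section

/-- The internal Hilbert space of the Standard Model (one generation):
8×4 complex matrices. -/
abbrev HF : Type := Matrix (Fin 8) (Fin 4) ℂ

abbrev M8 : Type := Matrix (Fin 8) (Fin 8) ℂ
abbrev M4 : Type := Matrix (Fin 4) (Fin 4) ℂ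
abbrev M3 : Type := Matrix (Fin 3) (Fin 3) ℂ
abbrev M2 : Type := Matrix (Fin 2) (Fin 2) ℂ

/-- A 2×2 complex matrix is of quaternionic form. -/
def IsQuat (q : M2) : Prop :=
  ∃ α β : ℂ, q 0 0 = α ∧ q 0 1 = β ∧ q 1 0 = -conj β ∧ q 1 1 = conj α

/-- The block-diagonal matrix with diagonal blocks λ, conj λ, q, λ, m
(of sizes 1,1,2,1,3). -/
def Pmat (l : ℂ) (q : M2) (m : M3) : M8 :=
  Matrix.of fun i j =>
    if i = 0 ∧ j = 0 then l
    else if i = 1 ∧ j = 1 then conj l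
    else if h : 2 ≤ (i : ℕ) ∧ (i : ℕ) < 4 ∧ 2 ≤ (j : ℕ) ∧ (j : ℕ) < 4 then
      q ⟨(i : ℕ) - 2, by omega⟩ ⟨(j : ℕ) - 2, by omega⟩
    else if i = 4 ∧ j = 4 then l
    else if h : 5 ≤ (i : ℕ) ∧ 5 ≤ (j : ℕ) then
      m ⟨(i : ℕ) - 5, by have := i.isLt; omega⟩ ⟨(j : ℕ) - 5, by have := j.isLt; omega⟩
    else 0

/-- The operator ξ ↦ A ξ B on H_F. -/
def lrOp (A : M8) (B : M4) : Module.End ℂ HF where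
  toFun ξ := A * ξ * B
  map_add' x y := by simp [Matrix.mul_add, Matrix.add_mul]
  map_smul' c x := by simp [Matrix.mul_smul, Matrix.smul_mul]

/-- Left multiplication by an 8×8 matrix as an operator on H_F. -/
def lmul (A : M8) : Module.End ℂ HF where
  toFun ξ := A * ξ
  map_add' x y := Matrix.mul_add A x y
  map_smul' c x := by simp [Matrix.mul_smul]

/-- The representation π_F of A_F = ℂ ⊕ ℍ ⊕ M₃(ℂ) on H_F. -/
def piF (l : ℂ) (q : M2) (m : M3) : Module.End ℂ HF := lmul (Pmat l q m)

/-- The image π_F(A_F) as a set of operators. -/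
def piFSet : Set (Module.End ℂ HF) := { T | ∃ l q m, IsQuat q ∧ T = piF l q m }

/-- The real structure J_F: ξ = [v₁; v₂] ↦ [v₂*; v₁*]. -/
def JF (ξ : HF) : HF :=
  Matrix.of fun i j =>
    if h : (i : ℕ) < 4 then
      conj (ξ ⟨(j : ℕ) + 4, by have := j.isLt; omega⟩ ⟨(i : ℕ), h⟩)
    else
      conj (ξ ⟨(j : ℕ), by have := j.isLt; omega⟩ ⟨(i : ℕ) - 4, by have := i.isLt; omega⟩)

lemma JF_add (x y : HF) : JF (x + y) = JF x + JF y := by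
  funext i j
  by_cases h : (i : ℕ) < 4 <;> simp [JF, h]

lemma JF_smul (c : ℂ) (x : HF) : JF (c • x) = conj c • JF x := by
  funext i j
  by_cases h : (i : ℕ) < 4 <;> simp [JF, h]

/-- Conjugation T ↦ J_F ∘ T ∘ J_F, a ℂ-linear operator on H_F. -/
def conjByJ (T : Module.End ℂ HF) : Module.End ℂ HF where
  toFun ξ := JF (T (JF ξ))
  map_add' x y := by
    show JF (T (JF (x + y))) = JF (T (JF x)) + JF (T (JF y))
    rw [JF_add, map_add, JF_add]
  map_smul' c x := by
    show JF (T (JF (c • x))) = c • JF (T (JF x))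
    rw [JF_smul, _root_.map_smul, JF_smul, Complex.conj_conj]

abbrev E8 (i j : Fin 8) : M8 := Matrix.single i j 1
abbrev E4 (i j : Fin 4) : M4 := Matrix.single i j 1

def M1mat (Yν Ye YR : ℂ) : M8 :=
  conj Yν • E8 0 2 + conj Ye • E8 1 3 + Yν • E8 2 0 + Ye • E8 3 1
    + conj YR • E8 0 4 + YR • E8 4 0

def M2mat (Yu Yd : ℂ) : M8 :=
  conj Yu • E8 0 2 + conj Yd • E8 1 3 + Yu • E8 2 0 + Yd • E8 3 1

def N1mat (Yν Ye : ℂ) : M4 :=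
  conj Yν • E4 0 2 + conj Ye • E4 1 3 + Yν • E4 2 0 + Ye • E4 3 1

def N2mat (Yu Yd : ℂ) : M4 :=
  conj Yu • E4 0 2 + conj Yd • E4 1 3 + Yu • E4 2 0 + Yd • E4 3 1

/-- The internal Dirac operator D_F (one generation). -/
def DF (Yν Ye Yu Yd YR : ℂ) : Module.End ℂ HF :=
  lrOp (M1mat Yν Ye YR) (E4 0 0) + lrOp (M2mat Yu Yd) (1 - E4 0 0)
    + lrOp (E8 4 4) (N1mat Yν Ye) + lrOp (E8 5 5 + E8 6 6 + E8 7 7) (N2mat Yu Yd)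

/-- Generating set of the Clifford algebra: π_F(A_F) ∪ [D_F, π_F(A_F)]. -/
def genSet (Yν Ye Yu Yd YR : ℂ) : Set (Module.End ℂ HF) :=
  piFSet ∪ { T | ∃ l q m, IsQuat q ∧
    T = DF Yν Ye Yu Yd YR * piF l q m - piF l q m * DF Yν Ye Yu Yd YR }

/-- The Clifford algebra Cl_{D_F}(A_F). -/
def ClDF (Yν Ye Yu Yd YR : ℂ) : Subalgebra ℂ (Module.End ℂ HF) :=
  Algebra.adjoin ℂ (genSet Yν Ye Yu Yd YR)

/-- Grading χ_F. -/
def G1 : M8 := Matrix.diagonal ![1, 1, -1, -1, 0, 0, 0, 0]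
def G2 : M8 := Matrix.diagonal ![0, 0, 0, 0, -1, -1, -1, -1]
def G3 : M4 := Matrix.diagonal ![1, 1, -1, -1]

def chiF : Module.End ℂ HF := lmul G1 + lrOp G2 G3

/-- The block-diagonal 8×8 matrix diag(a, λ, m) with blocks of sizes 4, 1, 3. -/
def diagALM (a : M4) (l : ℂ) (m : M3) : M8 :=
  Matrix.of fun i j =>
    if h : (i : ℕ) < 4 ∧ (j : ℕ) < 4 then a ⟨(i : ℕ), h.1⟩ ⟨(j : ℕ), h.2⟩
    else if i = 4 ∧ j = 4 then l
    else if h : 5 ≤ (i : ℕ) ∧ 5 ≤ (j : ℕ) then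
      m ⟨(i : ℕ) - 5, by have := i.isLt; omega⟩ ⟨(j : ℕ) - 5, by have := j.isLt; omega⟩
    else 0

/-- The operator ξ ↦ diag(a,λ,m) ξ e₁₁ + diag(b,λ,m) ξ (1₄ − e₁₁). -/
def Bop (a b : M4) (l : ℂ) (m : M3) : Module.End ℂ HF :=
  lrOp (diagALM a l m) (E4 0 0) + lrOp (diagALM b l m) (1 - E4 0 0)

/-- The algebra B of Lemma (B), as a set of operators. -/
def BSet : Set (Module.End ℂ HF) := { T | ∃ a b l m, T = Bop a b l m }

/-- The commutant C_F of P(A_F) in M₈(ℂ), as a set. -/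
def CFSet : Set M8 := { X | ∃ q11 q12 q21 q22 α β δ : ℂ,
  X = q11 • E8 0 0 + q12 • E8 0 4 + q21 • E8 4 0 + q22 • E8 4 4
    + α • E8 1 1 + β • (E8 2 2 + E8 3 3) + δ • (E8 5 5 + E8 6 6 + E8 7 7) }

/-- The block-diagonal 4×4 matrix diag(λ, m). -/
def diagLM (l : ℂ) (m : M3) : M4 :=
  Matrix.of fun i j =>
    if i = 0 ∧ j = 0 then l
    else if h : 1 ≤ (i : ℕ) ∧ 1 ≤ (j : ℕ) then
      m ⟨(i : ℕ) - 1, by have := i.isLt; omega⟩ ⟨(j : ℕ) - 1, by have := j.isLt; omega⟩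
    else 0

/-- The block-diagonal 4×4 matrix diag(λ, conj λ, q). -/
def diagLLQ (l : ℂ) (q : M2) : M4 :=
  Matrix.of fun i j =>
    if i = 0 ∧ j = 0 then l
    else if i = 1 ∧ j = 1 then conj l
    else if h : 2 ≤ (i : ℕ) ∧ 2 ≤ (j : ℕ) then
      q ⟨(i : ℕ) - 2, by have := i.isLt; omega⟩ ⟨(j : ℕ) - 2, by have := j.isLt; omega⟩
    else 0

/-- E_u = diag(1₄, 0₄) ∈ M₈(ℂ). -/
def Eu : M8 := Matrix.of fun i j => if i = j ∧ (i : ℕ) < 4 then 1 else 0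

/-- E_l = diag(0₄, 1₄) ∈ M₈(ℂ). -/
def El : M8 := Matrix.of fun i j => if i = j ∧ 4 ≤ (i : ℕ) then 1 else 0

/-- The block-diagonal 8×8 matrix diag(b, c) with two 4×4 blocks. -/
def diag44 (b c : M4) : M8 :=
  Matrix.of fun i j =>
    if h : (i : ℕ) < 4 ∧ (j : ℕ) < 4 then b ⟨(i : ℕ), h.1⟩ ⟨(j : ℕ), h.2⟩
    else if h : 4 ≤ (i : ℕ) ∧ 4 ≤ (j : ℕ) then
      c ⟨(i : ℕ) - 4, by have := i.isLt; omega⟩ ⟨(j : ℕ) - 4, by have := j.isLt; omega⟩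
    else 0


lemma fv8_0 : ((0 : Fin 8) : ℕ) = 0 := rfl
lemma fv8_1 : ((1 : Fin 8) : ℕ) = 1 := rfl
lemma fv8_2 : ((2 : Fin 8) : ℕ) = 2 := rfl
lemma fv8_3 : ((3 : Fin 8) : ℕ) = 3 := rfl
lemma fv8_4 : ((4 : Fin 8) : ℕ) = 4 := rfl
lemma fv8_5 : ((5 : Fin 8) : ℕ) = 5 := rfl
lemma fv8_6 : ((6 : Fin 8) : ℕ) = 6 := rfl
lemma fv8_7 : ((7 : Fin 8) : ℕ) = 7 := rfl
lemma fv4_0 : ((0 : Fin 4) : ℕ) = 0 := rfl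
lemma fv4_1 : ((1 : Fin 4) : ℕ) = 1 := rfl
lemma fv4_2 : ((2 : Fin 4) : ℕ) = 2 := rfl
lemma fv4_3 : ((3 : Fin 4) : ℕ) = 3 := rfl

lemma g1v_0 : (![(1:ℂ), 1, -1, -1, 0, 0, 0, 0]) (0 : Fin 8) = 1 := rfl
lemma g2v_0 : (![(0:ℂ), 0, 0, 0, -1, -1, -1, -1]) (0 : Fin 8) = 0 := rfl
lemma g1v_1 : (![(1:ℂ), 1, -1, -1, 0, 0, 0, 0]) (1 : Fin 8) = 1 := rfl
lemma g2v_1 : (![(0:ℂ), 0, 0, 0, -1, -1, -1, -1]) (1 : Fin 8) = 0 := rfl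
lemma g1v_2 : (![(1:ℂ), 1, -1, -1, 0, 0, 0, 0]) (2 : Fin 8) = -1 := rfl
lemma g2v_2 : (![(0:ℂ), 0, 0, 0, -1, -1, -1, -1]) (2 : Fin 8) = 0 := rfl
lemma g1v_3 : (![(1:ℂ), 1, -1, -1, 0, 0, 0, 0]) (3 : Fin 8) = -1 := rfl
lemma g2v_3 : (![(0:ℂ), 0, 0, 0, -1, -1, -1, -1]) (3 : Fin 8) = 0 := rfl
lemma g1v_4 : (![(1:ℂ), 1, -1, -1, 0, 0, 0, 0]) (4 : Fin 8) = 0 := rfl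
lemma g2v_4 : (![(0:ℂ), 0, 0, 0, -1, -1, -1, -1]) (4 : Fin 8) = -1 := rfl
lemma g1v_5 : (![(1:ℂ), 1, -1, -1, 0, 0, 0, 0]) (5 : Fin 8) = 0 := rfl
lemma g2v_5 : (![(0:ℂ), 0, 0, 0, -1, -1, -1, -1]) (5 : Fin 8) = -1 := rfl
lemma g1v_6 : (![(1:ℂ), 1, -1, -1, 0, 0, 0, 0]) (6 : Fin 8) = 0 := rfl
lemma g2v_6 : (![(0:ℂ), 0, 0, 0, -1, -1, -1, -1]) (6 : Fin 8) = -1 := rfl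
lemma g1v_7 : (![(1:ℂ), 1, -1, -1, 0, 0, 0, 0]) (7 : Fin 8) = 0 := rfl
lemma g2v_7 : (![(0:ℂ), 0, 0, 0, -1, -1, -1, -1]) (7 : Fin 8) = -1 := rfl
lemma g3v_0 : (![(1:ℂ), 1, -1, -1]) (0 : Fin 4) = 1 := rfl
lemma g3v_1 : (![(1:ℂ), 1, -1, -1]) (1 : Fin 4) = 1 := rfl
lemma g3v_2 : (![(1:ℂ), 1, -1, -1]) (2 : Fin 4) = -1 := rfl
lemma g3v_3 : (![(1:ℂ), 1, -1, -1]) (3 : Fin 4) = -1 := rfl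

lemma L1 (a b : Fin 8) (v : ℂ) (ξ : HF) (i : Fin 8) (j : Fin 4) :
    (Matrix.single a b v * ξ) i j = if i = a then v * ξ b j else 0 := by
  simp [Matrix.mul_apply, Matrix.single, ite_and, eq_comm]

lemma L2 (c d : Fin 4) (v : ℂ) (ξ : HF) (i : Fin 8) (j : Fin 4) :
    (ξ * Matrix.single c d v) i j = if j = d then ξ i c * v else 0 := by
  simp [Matrix.mul_apply, Matrix.single, ite_and, eq_comm]

set_option maxHeartbeats 1000000 in
/-- the KO-dimension of the internal spectral triple is 6. -/
theorem stmt_10 (Yν Ye Yu Yd YR : ℂ) :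
    (∀ ξ : HF, JF (JF ξ) = ξ) ∧
    (∀ ξ : HF, DF Yν Ye Yu Yd YR (JF ξ) = JF (DF Yν Ye Yu Yd YR ξ)) ∧
    (∀ ξ : HF, chiF (JF ξ) = -(JF (chiF ξ))) := by
  refine ⟨?_, ?_, ?_⟩
  · intro ξ
    funext i j
    fin_cases i <;> fin_cases j <;> simp [JF] <;>
      (try (intro h; first | omega | (congr 1 <;> first | rfl | exact Fin.ext (by omega))))
  · intro ξ
    funext i j
    simp only [DF, lrOp, JF, M1mat, M2mat, N1mat, N2mat, Matrix.add_mul, Matrix.mul_add,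
      Matrix.mul_sub, Matrix.sub_mul, Matrix.smul_mul, Matrix.mul_smul,
      Matrix.mul_one, Matrix.one_mul, LinearMap.add_apply, LinearMap.coe_mk,
      AddHom.coe_mk, Matrix.add_apply, Matrix.sub_apply, Matrix.smul_apply,
      Matrix.of_apply, smul_eq_mul, map_add, map_sub, _root_.map_mul, L1, L2,
      smul_single, mul_one]
    fin_cases i <;> fin_cases j <;>
      simp [fv8_0, fv8_1, fv8_2, fv8_3, fv8_4, fv8_5, fv8_6, fv8_7, fv4_0, fv4_1, fv4_2, fv4_3, Fin.mk_eq_mk] <;> ring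
  · intro ξ
    funext i j
    simp only [chiF, lmul, lrOp, G1, G2, G3, LinearMap.add_apply, LinearMap.coe_mk,
      AddHom.coe_mk, Matrix.add_apply, Matrix.neg_apply, JF, Matrix.of_apply,
      Matrix.diagonal_mul, Matrix.mul_diagonal, map_add, map_neg, _root_.map_mul, map_zero]
    fin_cases i <;> fin_cases j <;>
      simp [fv8_0, fv8_1, fv8_2, fv8_3, fv8_4, fv8_5, fv8_6, fv8_7, fv4_0, fv4_1, fv4_2, fv4_3, Fin.mk_eq_mk, Matrix.diagonal_mul, Matrix.mul_diagonal, g1v_0, g1v_1, g1v_2, g1v_3, g1v_4, g1v_5, g1v_6, g1v_7, g2v_0, g2v_1, g2v_2, g2v_3, g2v_4, g2v_5, g2v_6, g2v_7, g3v_0, g3v_1, g3v_2, g3v_3] <;> ring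

end
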